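/- Let T be a tree on n vertices and q a nonzero indeterminate with q ≠ ±1. Then the determinant of the exponential distance matrix 𝓕 of T, with entries 𝓕_{ij} = q^{d(i,j)}, equals (1−q²)^{n−1}. -/

import Mathlib

open SimpleGraph Matrix

/-- The exponential distance matrix of a connected graph `G`:
the `(u,v)` entry is `q ^ d(u,v)`. -/
noncomputable def expDistMatrix {V : Type*} (G : SimpleGraph V) (q : ℝ) : Matrix V V ℝ :=
  Matrix.of fun u v => q ^ (G.dist u v)

namespace ExpDistAux

variable {V : Type*} {G : SimpleGraph V}

/-- Lift a walk whose support lies in `s` to the induced subgraph. -/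
def liftWalk {G : SimpleGraph V} {s : Set V} :
    ∀ {a b : V} (ha : a ∈ s) (hb : b ∈ s) (p : G.Walk a b),
      (∀ x ∈ p.support, x ∈ s) → (G.induce s).Walk ⟨a, ha⟩ ⟨b, hb⟩
  | _, _, _, _, .nil, _ => .nil
  | _, _, ha, hb, .cons (v := c) h p, hs =>
      .cons (by exact h)
        (liftWalk (hs c (by simp)) hb p (fun x hx => hs x (by simp [hx])))

lemma liftWalk_length {G : SimpleGraph V} {s : Set V} :
    ∀ {a b : V} (ha : a ∈ s) (hb : b ∈ s) (p : G.Walk a b)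
      (hp : ∀ x ∈ p.support, x ∈ s), (liftWalk ha hb p hp).length = p.length
  | _, _, _, _, .nil, _ => rfl
  | _, _, ha, hb, .cons h p, hs => by
      simp [liftWalk, liftWalk_length]
      exact congrArg (· + 1) (liftWalk_length _ hb p _)

lemma dist_leaf (hc : G.Connected) {v u : V} (hadj : G.Adj v u)
    (huniq : ∀ x, G.Adj v x → x = u) {w : V} (hw : w ≠ v) :
    G.dist v w = G.dist u w + 1 := by
  have hle : G.dist v w ≤ G.dist u w + 1 := by
    have h1 : G.dist v u = 1 := by rw [dist_eq_one_iff_adj]; exact hadj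
    have := hc.dist_triangle (u := v) (v := u) (w := w)
    omega
  have hge : G.dist u w + 1 ≤ G.dist v w := by
    obtain ⟨p, hp⟩ := (hc v w).exists_walk_length_eq_dist
    cases p with
    | nil => exact absurd rfl hw
    | cons h q =>
        rename_i x
        have hx : x = u := huniq x h
        subst hx
        have := G.dist_le q
        simp only [Walk.length_cons] at hp
        omega
  omega

lemma shortest_avoids_leaf [DecidableEq V] (hc : G.Connected) {v u : V} (hadj : G.Adj v u)
    (huniq : ∀ x, G.Adj v x → x = u) {a b : V} (ha : a ≠ v) (hb : b ≠ v)
    (p : G.Walk a b) (hlen : p.length = G.dist a b) : v ∉ p.support := by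
  intro hv
  have h1 : G.dist a v ≤ (p.takeUntil v hv).length := G.dist_le _
  have h2 : G.dist v b ≤ (p.dropUntil v hv).length := G.dist_le _
  have h3 : (p.takeUntil v hv).length + (p.dropUntil v hv).length = p.length := by
    conv_rhs => rw [← p.take_spec hv]
    rw [Walk.length_append]
  have h4 : G.dist a v = G.dist u a + 1 := by
    rw [G.dist_comm, dist_leaf hc hadj huniq ha, G.dist_comm]
  have h5 : G.dist v b = G.dist u b + 1 := dist_leaf hc hadj huniq hb
  have h6 : G.dist a b ≤ G.dist a u + G.dist u b := hc.dist_triangle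
  have h7 : G.dist a u = G.dist u a := G.dist_comm ..
  omega

lemma dist_induce [DecidableEq V] (hG : G.IsTree) {v u : V} (hadj : G.Adj v u)
    (huniq : ∀ x, G.Adj v x → x = u) {a b : V} (ha : a ≠ v) (hb : b ≠ v) :
    (G.induce {x | x ≠ v}).dist ⟨a, ha⟩ ⟨b, hb⟩ = G.dist a b := by
  have hc := hG.isConnected
  obtain ⟨p, hp⟩ := (hc a b).exists_walk_length_eq_dist
  have hvp : v ∉ p.support := shortest_avoids_leaf hc hadj huniq ha hb p hp
  have hsupp : ∀ x ∈ p.support, x ∈ {x | x ≠ v} := fun x hx hxv => hvp (hxv ▸ hx)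
  apply le_antisymm
  · have := (G.induce {x | x ≠ v}).dist_le (liftWalk (s := {x | x ≠ v}) ha hb p hsupp)
    rwa [liftWalk_length, hp] at this
  · have hreach : (G.induce {x | x ≠ v}).Reachable ⟨a, ha⟩ ⟨b, hb⟩ :=
      ⟨liftWalk (s := {x | x ≠ v}) ha hb p hsupp⟩
    obtain ⟨r, hr⟩ := hreach.exists_walk_length_eq_dist
    have := G.dist_le (r.map (SimpleGraph.Embedding.induce {x | x ≠ v}).toHom)
    rwa [Walk.length_map, hr] at this

lemma isTree_induce [DecidableEq V] (hG : G.IsTree) {v u : V} (hadj : G.Adj v u)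
    (huniq : ∀ x, G.Adj v x → x = u) :
    (G.induce {x | x ≠ v}).IsTree := by
  have hc := hG.isConnected
  refine ⟨@SimpleGraph.Connected.mk _ _ ?_ ⟨⟨u, hadj.ne'⟩⟩, ?_⟩
  · rintro ⟨a, ha⟩ ⟨b, hb⟩
    obtain ⟨p, hp⟩ := (hc a b).exists_walk_length_eq_dist
    have hvp : v ∉ p.support := shortest_avoids_leaf hc hadj huniq ha hb p hp
    exact ⟨liftWalk (s := {x | x ≠ v}) ha hb p (fun x hx hxv => hvp (hxv ▸ hx))⟩
  · intro x c hcyc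
    exact hG.2 (c.map (SimpleGraph.Embedding.induce (G := G) {x | x ≠ v}).toHom)
      (hcyc.map (SimpleGraph.Embedding.induce (G := G) {x | x ≠ v}).injective)

lemma exists_leaf {V : Type*} [Fintype V] {G : SimpleGraph V}
    (hG : G.IsTree) (h2 : 2 ≤ Fintype.card V) :
    ∃ v u, G.Adj v u ∧ ∀ x, G.Adj v x → x = u := by
  classical
  have hc := hG.isConnected
  have hdeg1 : ∀ v : V, 1 ≤ G.degree v := by
    intro v
    rw [Nat.one_le_iff_ne_zero, ← Nat.pos_iff_ne_zero, G.degree_pos_iff_exists_adj]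
    obtain ⟨w, hw⟩ := Fintype.exists_ne_of_one_lt_card h2 v
    obtain ⟨p⟩ := hc v w
    cases p with
    | nil => exact absurd rfl hw.symm
    | cons h q => exact ⟨_, h⟩
  have hcard := hG.card_edgeFinset
  have hsum : ∑ v, G.degree v + 2 = 2 * Fintype.card V := by
    rw [G.sum_degrees_eq_twice_card_edges, ← hcard]; ring
  by_contra hno
  push_neg at hno
  have hdeg2 : ∀ v : V, 2 ≤ G.degree v := by
    intro v
    rcases Nat.lt_or_ge (G.degree v) 2 with h | h
    · exfalso
      have h' : G.degree v = 1 := by have := hdeg1 v; omega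
      obtain ⟨u, hu⟩ := Finset.card_eq_one.mp
        (by rw [← h']; exact G.card_neighborFinset_eq_degree v)
      have hadj : G.Adj v u := by
        have : u ∈ G.neighborFinset v := hu ▸ Finset.mem_singleton_self u
        rwa [SimpleGraph.mem_neighborFinset] at this
      obtain ⟨x, hx, hxu⟩ := hno v u hadj
      apply hxu
      have hx' : x ∈ G.neighborFinset v := by rwa [SimpleGraph.mem_neighborFinset]
      rw [hu] at hx'
      exact Finset.mem_singleton.mp hx'
    · exact h
  have : 2 * Fintype.card V ≤ ∑ v, G.degree v := by
    calc 2 * Fintype.card V = ∑ _v : V, 2 := by simp [mul_comm]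
    _ ≤ ∑ v, G.degree v := Finset.sum_le_sum fun v _ => hdeg2 v
  omega

theorem main (n : ℕ) : ∀ {V : Type u_1} [Fintype V] [DecidableEq V]
    (G : SimpleGraph V), G.IsTree → Fintype.card V = n → ∀ q : ℝ,
    (expDistMatrix G q).det = (1 - q ^ 2) ^ (n - 1) := by
  induction n using Nat.strong_induction_on with
  | _ n IH =>
    intro V _ _ G hG hn q
    classical
    rcases Nat.lt_or_ge n 2 with hsmall | h2
    · -- n = 0 or 1; n = 0 impossible
      have hpos : 0 < Fintype.card V := Fintype.card_pos_iff.mpr hG.isConnected.nonempty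
      have hn1 : n = 1 := by omega
      subst hn1
      obtain ⟨a, ha⟩ := Fintype.card_eq_one_iff.mp hn
      haveI : Unique V := ⟨⟨a⟩, ha⟩
      rw [Matrix.det_unique]
      simp [expDistMatrix, SimpleGraph.dist_self]
    · -- inductive step
      obtain ⟨v, u, hadj, huniq⟩ := exists_leaf hG (hn ▸ h2)
      set s : Set V := {x | x ≠ v} with hs
      set F : Matrix V V ℝ := expDistMatrix G q with hF
      set M : Matrix V V ℝ := F.updateRow v (F v + (-q) • F u) with hM
      have hdetM : M.det = F.det := Matrix.det_updateRow_add_smul_self F hadj.ne (-q)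
      have hd_uv : G.dist u v = 1 := by
        rw [SimpleGraph.dist_eq_one_iff_adj]; exact hadj.symm
      have hrowv : ∀ w : V, w ≠ v → M v w = 0 := by
        intro w hw
        have hdvw : G.dist v w = G.dist u w + 1 :=
          dist_leaf hG.isConnected hadj huniq hw
        simp only [hM, Matrix.updateRow_self, Pi.add_apply, Pi.smul_apply, smul_eq_mul,
          hF, expDistMatrix, Matrix.of_apply, hdvw]
        ring
      have hMvv : M v v = 1 - q ^ 2 := by
        simp only [hM, Matrix.updateRow_self, Pi.add_apply, Pi.smul_apply, smul_eq_mul,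
          hF, expDistMatrix, Matrix.of_apply, SimpleGraph.dist_self, hd_uv]
        ring
      let e : {x // x ≠ v} ⊕ {x // ¬ x ≠ v} ≃ V := Equiv.sumCompl (fun x => x ≠ v)
      letI : Unique {x // ¬ x ≠ v} :=
        ⟨⟨⟨v, not_not_intro rfl⟩⟩, fun a => Subtype.ext (not_not.mp a.2)⟩
      have hdetN : (M.submatrix e e).det = M.det := Matrix.det_submatrix_equiv_self e M
      set N := M.submatrix e e with hN
      have hblock : N.toBlocks₂₁ = 0 := by
        ext a b
        have hav : (a : V) = v := not_not.mp a.2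
        simp only [Matrix.toBlocks₂₁, Matrix.of_apply, hN, Matrix.submatrix_apply, e,
          Equiv.sumCompl_apply_inr, Equiv.sumCompl_apply_inl, hav, Matrix.zero_apply]
        exact hrowv b b.2
      have hdet_split : N.det = N.toBlocks₁₁.det * N.toBlocks₂₂.det := by
        conv_lhs => rw [← Matrix.fromBlocks_toBlocks N, hblock]
        exact Matrix.det_fromBlocks_zero₂₁ _ _ _
      have hN22 : N.toBlocks₂₂.det = 1 - q ^ 2 := by
        rw [Matrix.det_unique]
        have hdv : ((default : {x // ¬ x ≠ v}) : V) = v := rfl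
        simp only [Matrix.toBlocks₂₂, Matrix.of_apply, hN, Matrix.submatrix_apply, e,
          Equiv.sumCompl_apply_inr, hdv]
        exact hMvv
      -- identify the top-left block with the exponential distance matrix of the induced tree
      have hG' : (G.induce s).IsTree := isTree_induce hG hadj huniq
      have hcard' : Fintype.card {x // x ≠ v} = n - 1 := by
        have := Fintype.card_subtype_compl (p := fun x => x = v)
        simp only [Fintype.card_subtype_eq] at this
        have he : Fintype.card {x // ¬ x = v} = Fintype.card {x // x ≠ v} :=
          Fintype.card_congr (Equiv.refl _)
        omega
      have hN11 : N.toBlocks₁₁ = expDistMatrix (G.induce s) q := by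
        ext a b
        have hne : (a : V) ≠ v := a.2
        simp only [Matrix.toBlocks₁₁, Matrix.of_apply, hN, Matrix.submatrix_apply, e,
          Equiv.sumCompl_apply_inl, hM, Matrix.updateRow_ne hne, hF, expDistMatrix]
        exact congrArg (fun k => q ^ k) (dist_induce hG hadj huniq a.2 b.2).symm
      have hIH : (expDistMatrix (G.induce s) q).det = (1 - q ^ 2) ^ (n - 1 - 1) :=
        IH (n - 1) (by omega) (G.induce s) hG' hcard' q
      have : F.det = (1 - q ^ 2) ^ (n - 1 - 1) * (1 - q ^ 2) := by
        rw [← hdetM, ← hdetN, hdet_split, hN22, hN11]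
        exact congrArg (· * (1 - q ^ 2)) hIH
      rw [hF] at this
      rw [this, ← pow_succ]
      congr 1
      omega

end ExpDistAux

/-- For a tree on `n` vertices, `det 𝓕 = (1-q²)^(n-1)`. -/
theorem det_expDistMatrix_tree {V : Type*} [Fintype V] [DecidableEq V]
    (G : SimpleGraph V) (hG : G.IsTree) (n : ℕ) (hn : Fintype.card V = n)
    (q : ℝ) (hq0 : q ≠ 0) (hq1 : q ≠ 1) (hq1' : q ≠ -1) :
    (expDistMatrix G q).det = (1 - q ^ 2) ^ (n - 1) :=
  ExpDistAux.main n G hG hn q
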